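/- Let B be an N×N complex matrix. If the 2N×2N block matrix with blocks M₁₁ = B†B, M₁₂ = B, M₂₁ = B†, M₂₂ = I_N is positive semidefinite, then B is normal: B B† = B† B. -/

import Mathlib

open Matrix ComplexOrder

noncomputable section

lemma psd_trace_zero_eq_zero {n : ℕ} {A : Matrix (Fin n) (Fin n) ℂ}
    (hA : A.PosSemidef) (h : A.trace = 0) : A = 0 := by
  exact hA.trace_eq_zero_iff.mp h

/-- If the block matrix `[[B†B, B], [B†, 1]]` is positive semidefinite, then `B` is normal. -/
theorem block_psd_normal (N : ℕ) (B : Matrix (Fin N) (Fin N) ℂ)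
    (hpos : (Matrix.fromBlocks (Bᴴ * B) B Bᴴ 1).PosSemidef) :
    B * Bᴴ = Bᴴ * B := by
  haveI : Invertible (1 : Matrix (Fin N) (Fin N) ℂ) := invertibleOne
  have hone : (1 : Matrix (Fin N) (Fin N) ℂ).PosDef := Matrix.PosDef.one
  have := (Matrix.PosDef.fromBlocks₂₂ (Bᴴ * B) B hone).mp hpos
  have hS : (Bᴴ * B - B * Bᴴ).PosSemidef := by simpa using this
  have htr : (Bᴴ * B - B * Bᴴ).trace = 0 := by
    rw [Matrix.trace_sub, Matrix.trace_mul_comm, sub_self]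
  have := psd_trace_zero_eq_zero hS htr
  have := sub_eq_zero.mp this
  exact this.symm
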